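/- Let μ be a cardinal, n ≤ ω, σ a cardinal, and ⟨λ_i⟩_{i<σ} cardinals with κ = Σ_{i<σ} λ_i. Suppose K is a real closed field which contains a family witnessing σ ↛ (μ)_n^interval and, for each i < σ, a family witnessing λ_i ↛ (μ)_n^interval. Then there is a real closed field K′ admitting an ordered-ring embedding of K which contains a family witnessing κ ↛ (μ)_{2+2n}^interval (where 2+2n is interpreted as ω when n = ω). -/

import Mathlib

/-- A real closed field: a linearly ordered field in which every nonnegative element is a
square and every polynomial of odd degree has a root. -/
def IsRCF (K : Type) [Field K] [LinearOrder K] [IsStrictOrderedRing K] : Prop :=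
  (∀ x : K, 0 ≤ x → ∃ y : K, y ^ 2 = x) ∧
  (∀ p : Polynomial K, Odd p.natDegree → ∃ x : K, Polynomial.eval x p = 0)

/-- A bundled real closed field. -/
structure RCF where
  carrier : Type
  [inst : Field carrier]
  [instLO : LinearOrder carrier]
  [instSOR : IsStrictOrderedRing carrier]
  rcf : IsRCF carrier

attribute [instance] RCF.inst
attribute [instance] RCF.instLO
attribute [instance] RCF.instSOR

/-- Quantifier-free indiscernibility of a sequence of `ι`-tuples in an ordered field:
for every integer polynomial in the variables of `k` many tuples, the sign of its value is
the same on every increasing `k`-tuple of indices of the sequence. -/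
def PolyIndisc {L : Type} [Field L] [LinearOrder L] [IsStrictOrderedRing L] {ι : Type} {δ : Type} [LinearOrder δ]
    (b : δ → ι → L) : Prop :=
  ∀ (k : ℕ) (f : MvPolynomial (Fin k × ι) ℤ) (α β : Fin k → δ),
    StrictMono α → StrictMono β →
      ((0 < MvPolynomial.aeval (fun p => b (α p.1) p.2) f ↔
          0 < MvPolynomial.aeval (fun p => b (β p.1) p.2) f) ∧
        (MvPolynomial.aeval (fun p => b (α p.1) p.2) f = 0 ↔
          MvPolynomial.aeval (fun p => b (β p.1) p.2) f = 0))

/-- `IntervalWitness K θ μ ι I` : the family `I` of pairwise distinct `ι`-tuples of nonempty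
open intervals of `K` witnesses `θ ↛ (μ)_ι^interval` : in no real closed extension of `K` can
one choose points from `μ` many distinct members of the family forming a quantifier-free
indiscernible sequence. -/
def IntervalWitness (K : RCF) (θ μ : Cardinal) (ι : Type)
    (I : θ.ord.ToType → ι → K.carrier × K.carrier) : Prop :=
  Function.Injective I ∧
  (∀ β i, (I β i).1 < (I β i).2) ∧
  ∀ (L : RCF) (j : K.carrier →+*o L.carrier),
    ¬ ∃ (e : μ.ord.ToType → θ.ord.ToType) (b : μ.ord.ToType → ι → L.carrier),
        Function.Injective e ∧
        (∀ α i, j ((I (e α) i).1) < b α i ∧ b α i < j ((I (e α) i).2)) ∧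
        PolyIndisc b

/-- The index type of an `n`-tuple for `n ≤ ω`: `Fin m` for `n = m < ω`, and `ℕ` for
`n = ω` (i.e. `n = ⊤`). -/
def TupIdx (n : ℕ∞) : Type :=
  WithTop.recTopCoe ℕ (fun m => Fin m) n

open Filter in
/-- An ultrapower of a real closed field is real closed. -/
lemma germ_isRCF {K : Type} [Field K] [LinearOrder K] [IsStrictOrderedRing K] {ι : Type} (u : Ultrafilter ι)
    (h : IsRCF K) : IsRCF (Germ (u : Filter ι) K) := by
  classical
  constructor
  · intro x hx
    induction x using Germ.inductionOn with
    | h f =>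
      have hev : ∀ᶠ i in (u : Filter ι), (0:K) ≤ f i := by
        have : ((0 : ι → K) : Germ (u:Filter ι) K) ≤ ↑f := by simpa using hx
        exact Germ.coe_le.mp this
      refine ⟨↑(fun i => if hi : (0:K) ≤ f i then (h.1 (f i) hi).choose else 0), ?_⟩
      rw [← Germ.coe_pow]
      refine Germ.coe_eq.mpr ?_
      filter_upwards [hev] with i hi
      simp only [Pi.pow_apply, dif_pos hi]
      exact (h.1 (f i) hi).choose_spec
  · intro p hodd
    set d := p.natDegree with hd
    have hd0 : d ≠ 0 := by rintro h0; rw [h0] at hodd; simp at hodd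
    have hp0 : p ≠ 0 := fun h0 => hd0 (by simp [hd, h0])
    have hlead : p.coeff d ≠ 0 :=
      Polynomial.coeff_ne_zero_of_eq_degree (Polynomial.degree_eq_natDegree hp0)
    have hrep : ∀ j : ℕ, ∃ g : ι → K, (↑g : Germ (u:Filter ι) K) = p.coeff j := by
      intro j
      obtain ⟨g, hg⟩ := Quotient.exists_rep (p.coeff j)
      exact ⟨g, hg⟩
    choose rep hrep using hrep
    set q : ι → Polynomial K := fun s =>
      ∑ j ∈ Finset.range (d+1), Polynomial.C (rep j s) * Polynomial.X ^ j with hq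
    have hA : ∀ᶠ s in (u : Filter ι), rep d s ≠ 0 := by
      by_contra hcon
      have h2 : ∀ᶠ s in (u : Filter ι), rep d s = 0 := by
        have := (Ultrafilter.eventually_not (f := u) (p := fun s => rep d s ≠ 0)).mpr hcon
        simpa using this
      exact hlead (by
        rw [← hrep d]
        have : (↑(rep d) : Germ (u:Filter ι) K) = ((0 : ι → K) : Germ (u:Filter ι) K) :=
          Germ.coe_eq.mpr h2
        simpa using this)
    have hcoeff : ∀ s, (q s).coeff d = rep d s := by
      intro s
      simp [hq, Polynomial.finset_sum_coeff, Polynomial.coeff_C_mul, Polynomial.coeff_X_pow,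
        Finset.sum_ite_eq']
    have hdeg : ∀ s, rep d s ≠ 0 → (q s).natDegree = d := by
      intro s hs
      refine le_antisymm ?_ (Polynomial.le_natDegree_of_ne_zero (by rw [hcoeff s]; exact hs))
      refine Polynomial.natDegree_sum_le_of_forall_le _ _ fun j hj => ?_
      exact (Polynomial.natDegree_C_mul_X_pow_le _ _).trans
        (Nat.lt_succ_iff.mp (Finset.mem_range.mp hj))
    set x : ι → K := fun s =>
      if hs : ∃ r : K, (q s).eval r = 0 then hs.choose else 0 with hx
    have hroot : ∀ s, rep d s ≠ 0 → (q s).eval (x s) = 0 := by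
      intro s hs
      have : ∃ r : K, (q s).eval r = 0 := h.2 (q s) (by rw [hdeg s hs]; exact hodd)
      simp only [hx, dif_pos this]
      exact this.choose_spec
    refine ⟨↑x, ?_⟩
    rw [Polynomial.eval_eq_sum_range]
    have hterm : ∀ j, p.coeff j * (↑x : Germ (u:Filter ι) K) ^ j
        = ↑(fun s => rep j s * x s ^ j) := by
      intro j
      rw [← hrep j, ← Germ.coe_pow]
      exact (Germ.coe_mul _ _).symm
    calc (∑ j ∈ Finset.range (p.natDegree + 1), p.coeff j * (↑x : Germ (u:Filter ι) K) ^ j)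
        = ∑ j ∈ Finset.range (d+1),
            ((Germ.coeRingHom (u:Filter ι)) (fun s => rep j s * x s ^ j)) := by
          refine Finset.sum_congr rfl fun j _ => ?_
          rw [hterm j]; rfl
      _ = (Germ.coeRingHom (u:Filter ι)) (fun s => ∑ j ∈ Finset.range (d+1), rep j s * x s ^ j) := by
          rw [← map_sum]
          congr 1
          ext s
          simp
      _ = 0 := by
          change ((fun s => ∑ j ∈ Finset.range (d+1), rep j s * x s ^ j : ι → K) :
            Germ (u:Filter ι) K) = 0
          have h0' : (0 : Germ (u:Filter ι) K) = ((0 : ι → K) : Germ (u:Filter ι) K) := rfl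
          rw [h0']
          refine Germ.coe_eq.mpr ?_
          filter_upwards [hA] with s hs
          have := hroot s hs
          simpa [hq, Polynomial.eval_finset_sum] using this

/-- Restricting an indiscernible sequence of tuples to a subfamily of the coordinates. -/
lemma polyIndisc_comp {L : Type} [Field L] [LinearOrder L] [IsStrictOrderedRing L] {ι ι' δ : Type} [LinearOrder δ]
    {b : δ → ι' → L} (h : PolyIndisc b) (φ : ι → ι') :
    PolyIndisc (fun a t => b a (φ t)) := by
  intro k f α β hα hβ
  have := h k (MvPolynomial.rename (Prod.map id φ) f) α β hα hβ
  simpa [MvPolynomial.aeval_rename, Function.comp_def] using this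

lemma strictMono_pair {δ : Type} [Preorder δ] {x y : δ} (h : x < y) :
    StrictMono ![x, y] := by
  intro i j hij
  fin_cases i <;> fin_cases j <;> simp_all

/-- Sign-transfer for differences of a fixed coordinate along an indiscernible sequence. -/
lemma polyIndisc_pair {L : Type} [Field L] [LinearOrder L] [IsStrictOrderedRing L] {ι δ : Type} [LinearOrder δ]
    {b : δ → ι → L} (h : PolyIndisc b) (t : ι) (m : ℤ) (uu vv : Fin 2)
    {a1 a2 c1 c2 : δ} (h12 : a1 < a2) (h34 : c1 < c2) :
    (0 < b (![a1,a2] uu) t - b (![a1,a2] vv) t - (m : L) ↔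
      0 < b (![c1,c2] uu) t - b (![c1,c2] vv) t - (m : L)) := by
  have := (h 2 (MvPolynomial.X (uu,t) - MvPolynomial.X (vv,t) - MvPolynomial.C m)
    ![a1,a2] ![c1,c2] (strictMono_pair h12) (strictMono_pair h34)).1
  simpa using this

open Filter in
/-- In a suitable ultrapower of any linear ordered field there are `S`-many points pairwise
at distance at least `4`. -/
lemma exists_spread_points (K : Type) [Field K] [LinearOrder K] [IsStrictOrderedRing K] (S : Type) [LinearOrder S] :
    ∃ (ι : Type) (u : Ultrafilter ι) (c : S → Germ (u : Filter ι) K),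
      ∀ {i i' : S}, i < i' → c i + 4 ≤ c i' := by
  classical
  set l : Filter (Finset S) := (Ultrafilter.of (atTop : Filter (Finset S)) : Filter (Finset S))
    with hl
  set F : S → Finset S → K :=
    fun i s => ((4 * (s.filter (fun x => x < i)).card : ℕ) : K) with hF
  refine ⟨Finset S, Ultrafilter.of atTop, fun i => (↑(F i) : Germ l K), ?_⟩
  intro i i' hii
  have hmem : {s : Finset S | i ∈ s} ∈ l := by
    refine Ultrafilter.of_le (atTop : Filter (Finset S)) ?_
    refine mem_of_superset (Ici_mem_atTop ({i} : Finset S)) ?_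
    intro s hs
    exact Finset.singleton_subset_iff.mp hs
  have hev : (F i + fun _ => (4:K)) ≤ᶠ[l] F i' := by
    filter_upwards [hmem] with s hs
    have hsub : insert i (s.filter (fun x => x < i)) ⊆ s.filter (fun x => x < i') := by
      intro x hx
      rcases Finset.mem_insert.mp hx with rfl | hx
      · exact Finset.mem_filter.mpr ⟨hs, hii⟩
      · obtain ⟨hxs, hxi⟩ := Finset.mem_filter.mp hx
        exact Finset.mem_filter.mpr ⟨hxs, hxi.trans hii⟩
    have hcard : (s.filter (fun x => x < i)).card + 1 ≤ (s.filter (fun x => x < i')).card := by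
      have := Finset.card_le_card hsub
      rwa [Finset.card_insert_of_notMem (by simp)] at this
    have hcast : ((s.filter (fun x => x < i)).card + 1 : K)
        ≤ ((s.filter (fun x => x < i')).card : K) := by exact_mod_cast hcard
    simp only [hF, Pi.add_apply]
    push_cast
    nlinarith
  show (↑(F i) : Germ l K) + 4 ≤ ↑(F i')
  rw [show (4 : Germ l K) = (↑(fun _ : Finset S => (4:K)) : Germ l K) from rfl, ← Germ.coe_add]
  exact Germ.coe_le.mpr hev

/-- The coordinate-type equivalence needed in the singular step. -/
lemma tupIdx_equiv (n : ℕ∞) :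
    Nonempty ((Fin 2 ⊕ (TupIdx n ⊕ TupIdx n)) ≃ TupIdx (2 + 2 * n)) := by
  cases n using WithTop.recTopCoe with
  | top =>
    have h : (2 : ℕ∞) + 2 * ⊤ = ⊤ := by simp
    show Nonempty ((Fin 2 ⊕ (TupIdx ⊤ ⊕ TupIdx ⊤)) ≃ TupIdx ((2:ℕ∞) + 2 * ⊤))
    have : TupIdx ⊤ = ℕ := rfl
    exact ⟨(Denumerable.ofEncodableOfInfinite (Fin 2 ⊕ (ℕ ⊕ ℕ))).eqv.trans
      (Equiv.cast (congrArg TupIdx h.symm))⟩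
  | coe m =>
    show Nonempty ((Fin 2 ⊕ (TupIdx (m:ℕ∞) ⊕ TupIdx (m:ℕ∞))) ≃ TupIdx (2 + 2*(m:ℕ∞)))
    have h : (2 : ℕ∞) + 2 * (m : ℕ∞) = ((2 + 2 * m : ℕ) : ℕ∞) := by push_cast; ring
    rw [h]
    show Nonempty ((Fin 2 ⊕ (Fin m ⊕ Fin m)) ≃ Fin (2 + 2 * m))
    exact ⟨Fintype.equivFinOfCardEq (by simp; ring)⟩

open Filter in
theorem rcf_witness_singular_step (μ σ : Cardinal) (n : ℕ∞)
    (lam : σ.ord.ToType → Cardinal) (κ : Cardinal) (hκ : κ = Cardinal.sum lam)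
    (K : RCF)
    (I0 : σ.ord.ToType → TupIdx n → K.carrier × K.carrier)
    (h0 : IntervalWitness K σ μ (TupIdx n) I0)
    (I1 : ∀ i : σ.ord.ToType, (lam i).ord.ToType → TupIdx n → K.carrier × K.carrier)
    (h1 : ∀ i, IntervalWitness K (lam i) μ (TupIdx n) (I1 i)) :
    ∃ (K' : RCF) (_ : K.carrier →+*o K'.carrier)
      (I : κ.ord.ToType → TupIdx (2 + 2 * n) → K'.carrier × K'.carrier),
      IntervalWitness K' κ μ (TupIdx (2 + 2 * n)) I := by
  classical
  rcases eq_or_ne μ 0 with hμ0 | hμ0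
  · exfalso
    haveI : IsEmpty μ.ord.ToType :=
      Cardinal.mk_eq_zero_iff.mp (by rw [Cardinal.mk_ord_toType, hμ0])
    refine h0.2.2 K (OrderRingHom.id _)
      ⟨fun α => isEmptyElim α, fun α => isEmptyElim α, ?_, ?_, ?_⟩
    · intro a b _; exact isEmptyElim a
    · intro α; exact isEmptyElim α
    · intro k f α β _ _
      rcases Nat.eq_zero_or_pos k with rfl | hk
      · have : α = β := funext fun i => i.elim0
        subst this
        exact ⟨Iff.rfl, Iff.rfl⟩
      · exact isEmptyElim (α ⟨0, hk⟩)
  haveI hμne : Nonempty μ.ord.ToType :=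
    Cardinal.mk_ne_zero_iff.mp (by rw [Cardinal.mk_ord_toType]; exact hμ0)
  by_cases hσe : IsEmpty σ.ord.ToType
  · have hκ0 : κ = 0 := by
      rw [hκ]
      have hs : Cardinal.sum lam
          = Cardinal.mk (Σ i : σ.ord.ToType, (lam i).ord.ToType) := by
        rw [Cardinal.mk_sigma]
        exact congrArg _ (funext fun i => (Cardinal.mk_ord_toType (lam i)).symm)
      rw [hs, Cardinal.mk_eq_zero_iff]
      exact ⟨fun x => hσe.false x.1⟩
    haveI hκe : IsEmpty κ.ord.ToType :=
      Cardinal.mk_eq_zero_iff.mp (by rw [Cardinal.mk_ord_toType, hκ0])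
    refine ⟨K, OrderRingHom.id _, fun β => isEmptyElim β, ?_, ?_, ?_⟩
    · intro a b _; exact isEmptyElim a
    · intro β; exact isEmptyElim β
    · rintro L j ⟨e, b, -, -, -⟩
      exact isEmptyElim (e (Classical.arbitrary _))
  · haveI hσne : Nonempty σ.ord.ToType := not_isEmpty_iff.mp hσe
    letI : LinearOrder (TupIdx n → K.carrier × K.carrier) :=
      @IsWellOrder.linearOrder _ WellOrderingRel ⟨⟩
    obtain ⟨Idx, u, c₀, hc₀⟩ :=
      exists_spread_points K.carrier (TupIdx n → K.carrier × K.carrier)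
    set c : σ.ord.ToType → Filter.Germ (u : Filter Idx) K.carrier :=
      fun i => c₀ (I0 i) with hcdef
    have hcsep : ∀ {i i' : σ.ord.ToType}, i ≠ i' → c i + 4 ≤ c i' ∨ c i' + 4 ≤ c i := by
      intro i i' hne
      have hne' : I0 i ≠ I0 i' := fun hh => hne (h0.1 hh)
      rcases lt_or_gt_of_ne hne' with h | h
      · exact Or.inl (hc₀ h)
      · exact Or.inr (hc₀ h)
    set K' : RCF := RCF.mk (Filter.Germ (u : Filter Idx) K.carrier) (germ_isRCF u K.rcf)
      with hK'
    set cK : K.carrier →+*o K'.carrier :=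
      { toRingHom := (Filter.Germ.coeRingHom (u : Filter Idx)).comp (Pi.constRingHom Idx K.carrier),
        monotone' := fun a b hab => Filter.Germ.const_le hab } with hcK
    have hcKinj : Function.Injective cK :=
      ((Filter.Germ.coeRingHom (u : Filter Idx)).comp (Pi.constRingHom Idx K.carrier)).injective
    have hcKlt : ∀ {a b : K.carrier}, a < b → cK a < cK b :=
      fun hab => Filter.Germ.const_lt hab
    obtain ⟨E⟩ : Nonempty (κ.ord.ToType ≃ Σ i : σ.ord.ToType, (lam i).ord.ToType) := by
      rw [← Cardinal.eq, Cardinal.mk_ord_toType, hκ, Cardinal.mk_sigma]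
      exact congrArg _ (funext fun i => (Cardinal.mk_ord_toType (lam i)).symm)
    obtain ⟨P⟩ := tupIdx_equiv n
    set G : (Σ i : σ.ord.ToType, (lam i).ord.ToType) →
        (Fin 2 ⊕ (TupIdx n ⊕ TupIdx n)) → K'.carrier × K'.carrier :=
      fun p => Sum.elim (fun _ => (c p.1 - 1, c p.1 + 1))
        (Sum.elim (fun t => (cK (I0 p.1 t).1, cK (I0 p.1 t).2))
          (fun t => (cK (I1 p.1 p.2 t).1, cK (I1 p.1 p.2 t).2))) with hG
    set I : κ.ord.ToType → TupIdx (2 + 2*n) → K'.carrier × K'.carrier :=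
      fun β t => G (E β) (P.symm t) with hI
    have hcinj : Function.Injective c := by
      intro a b hab
      by_contra hne
      rcases hcsep hne with h | h
      · rw [hab] at h; linarith
      · rw [hab] at h; linarith
    have hGp : ∀ p p' : (Σ i : σ.ord.ToType, (lam i).ord.ToType),
        p.1 = p'.1 → (∀ t, I1 p.1 p.2 t = I1 p'.1 p'.2 t) → p = p' := by
      rintro ⟨i, a⟩ ⟨i', a'⟩ h1' h2'
      obtain rfl : i = i' := h1'
      have : a = a' := (h1 i).1 (funext fun t => h2' t)
      rw [this]
    refine ⟨K', cK, I, ?_, ?_, ?_⟩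
    · intro β β' hββ
      have happ : ∀ s, G (E β) s = G (E β') s := by
        intro s
        have h' := congrFun hββ (P s)
        simpa [hI, Equiv.symm_apply_apply] using h'
      have hfst : (E β).1 = (E β').1 := by
        have h01 := congrArg Prod.fst (happ (Sum.inl 0))
        simp only [hG, Sum.elim_inl] at h01
        apply hcinj
        linarith [h01]
      have hsnd : ∀ t, I1 (E β).1 (E β).2 t = I1 (E β').1 (E β').2 t := by
        intro t
        have h2' := happ (Sum.inr (Sum.inr t))
        simp only [hG, Sum.elim_inr, Prod.mk.injEq] at h2'
        exact Prod.ext (hcKinj h2'.1) (hcKinj h2'.2)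
      exact E.injective (hGp _ _ hfst hsnd)
    · intro β t
      show (G (E β) (P.symm t)).1 < (G (E β) (P.symm t)).2
      rcases P.symm t with s | s
      · show c (E β).1 - 1 < c (E β).1 + 1
        have h01 : (0:K'.carrier) < 1 := zero_lt_one
        linarith
      · rcases s with t' | t'
        · show cK (I0 (E β).1 t').1 < cK (I0 (E β).1 t').2
          exact hcKlt (h0.2.1 (E β).1 t')
        · show cK (I1 (E β).1 (E β).2 t').1 < cK (I1 (E β).1 (E β).2 t').2
          exact hcKlt ((h1 (E β).1).2.1 (E β).2 t')
    · rintro L j ⟨e, b, he, hb, hind⟩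
      have hIcode : ∀ α, I (e α) (P (Sum.inl 0))
          = (c (E (e α)).1 - 1, c (E (e α)).1 + 1) := by
        intro α; simp [hI, hG, Equiv.symm_apply_apply]
      have hxmem : ∀ α, j (c (E (e α)).1) - 1 < b α (P (Sum.inl 0)) ∧
          b α (P (Sum.inl 0)) < j (c (E (e α)).1) + 1 := by
        intro α
        have hmem := hb α (P (Sum.inl 0))
        rw [hIcode α] at hmem
        constructor
        · have h' := hmem.1; rwa [map_sub, map_one] at h'
        · have h' := hmem.2; rwa [map_add, map_one] at h'
      have hsep : ∀ {α α' : μ.ord.ToType}, c (E (e α)).1 + 4 ≤ c (E (e α')).1 →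
          (2:L.carrier) < b α' (P (Sum.inl 0)) - b α (P (Sum.inl 0)) := by
        intro α α' h4
        have hj2 : j (c (E (e α)).1) + 4 ≤ j (c (E (e α')).1) := by
          have hm : j (c (E (e α)).1 + 4) ≤ j (c (E (e α')).1) := j.monotone' h4
          rwa [map_add, map_ofNat] at hm
        have hu := (hxmem α).2
        have hv := (hxmem α').1
        linarith
      have hproj0 : ∀ α t', I (e α) (P (Sum.inr (Sum.inl t')))
          = (cK (I0 (E (e α)).1 t').1, cK (I0 (E (e α)).1 t').2) := by
        intro α t'; simp [hI, hG, Equiv.symm_apply_apply]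
      have hproj1 : ∀ α t', I (e α) (P (Sum.inr (Sum.inr t')))
          = (cK (I1 (E (e α)).1 (E (e α)).2 t').1, cK (I1 (E (e α)).1 (E (e α)).2 t').2) := by
        intro α t'; simp [hI, hG, Equiv.symm_apply_apply]
      by_cases hP : ∃ α α' : μ.ord.ToType, α < α' ∧
          (2:L.carrier) < b α' (P (Sum.inl 0)) - b α (P (Sum.inl 0))
      · obtain ⟨a1, a2, h12, hgt⟩ := hP
        have hall : ∀ {α α' : μ.ord.ToType}, α < α' →
            (2:L.carrier) < b α' (P (Sum.inl 0)) - b α (P (Sum.inl 0)) := by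
          intro α α' hlt
          have hiff := polyIndisc_pair hind (P (Sum.inl 0)) 2 1 0 hlt h12
          simp only [Matrix.cons_val_one, Matrix.head_cons, Matrix.cons_val_zero,
            Int.cast_ofNat] at hiff
          have h2' := hiff.mpr (by linarith)
          linarith
        have hinj_i : Function.Injective (fun α => (E (e α)).1) := by
          intro α α' hEq
          simp only at hEq
          by_contra hne
          rcases lt_trichotomy α α' with h | h | h
          · have hgt2 := hall h
            have hu1 := (hxmem α).1; have hu2 := (hxmem α).2
            have hv1 := (hxmem α').1; have hv2 := (hxmem α').2
            rw [hEq] at hu1 hu2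
            linarith
          · exact hne h
          · have hgt2 := hall h
            have hu1 := (hxmem α).1; have hu2 := (hxmem α).2
            have hv1 := (hxmem α').1; have hv2 := (hxmem α').2
            rw [hEq] at hu1 hu2
            linarith
        refine h0.2.2 L (j.comp cK)
          ⟨fun α => (E (e α)).1, fun α t' => b α (P (Sum.inr (Sum.inl t'))), hinj_i, ?_, ?_⟩
        · intro α t'
          have hmem := hb α (P (Sum.inr (Sum.inl t')))
          rw [hproj0 α t'] at hmem
          exact hmem
        · exact polyIndisc_comp hind _
      · by_cases hQ : ∃ α α' : μ.ord.ToType, α < α' ∧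
            (2:L.carrier) < b α (P (Sum.inl 0)) - b α' (P (Sum.inl 0))
        · obtain ⟨a1, a2, h12, hgt⟩ := hQ
          have hall : ∀ {α α' : μ.ord.ToType}, α < α' →
              (2:L.carrier) < b α (P (Sum.inl 0)) - b α' (P (Sum.inl 0)) := by
            intro α α' hlt
            have hiff := polyIndisc_pair hind (P (Sum.inl 0)) 2 0 1 hlt h12
            simp only [Matrix.cons_val_one, Matrix.head_cons, Matrix.cons_val_zero,
              Int.cast_ofNat] at hiff
            have h2' := hiff.mpr (by linarith)
            linarith
          have hinj_i : Function.Injective (fun α => (E (e α)).1) := by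
            intro α α' hEq
            simp only at hEq
            by_contra hne
            rcases lt_trichotomy α α' with h | h | h
            · have hgt2 := hall h
              have hu1 := (hxmem α).1; have hu2 := (hxmem α).2
              have hv1 := (hxmem α').1; have hv2 := (hxmem α').2
              rw [hEq] at hu1 hu2
              linarith
            · exact hne h
            · have hgt2 := hall h
              have hu1 := (hxmem α).1; have hu2 := (hxmem α).2
              have hv1 := (hxmem α').1; have hv2 := (hxmem α').2
              rw [hEq] at hu1 hu2
              linarith
          refine h0.2.2 L (j.comp cK)
            ⟨fun α => (E (e α)).1, fun α t' => b α (P (Sum.inr (Sum.inl t'))), hinj_i, ?_, ?_⟩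
          · intro α t'
            have hmem := hb α (P (Sum.inr (Sum.inl t')))
            rw [hproj0 α t'] at hmem
            exact hmem
          · exact polyIndisc_comp hind _
        · have hconst : ∀ α α' : μ.ord.ToType, (E (e α)).1 = (E (e α')).1 := by
            intro α α'
            rcases lt_trichotomy α α' with h | h | h
            · by_contra hne
              rcases hcsep hne with hlt | hlt
              · exact hP ⟨α, α', h, hsep hlt⟩
              · exact hQ ⟨α, α', h, hsep hlt⟩
            · rw [h]
            · by_contra hne
              rcases hcsep hne with hlt | hlt
              · exact hQ ⟨α', α, h, hsep hlt⟩
              · exact hP ⟨α', α, h, hsep hlt⟩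
          have hI1cast : ∀ {i i' : σ.ord.ToType} (hii : i = i') (a : (lam i).ord.ToType),
              I1 i' (cast (congrArg (fun z => (lam z).ord.ToType) hii) a) = I1 i a := by
            rintro i _ rfl a; rfl
          set α₀ := Classical.arbitrary μ.ord.ToType with hα₀
          set e1 : μ.ord.ToType → (lam (E (e α₀)).1).ord.ToType :=
            fun α => cast (congrArg (fun z => (lam z).ord.ToType) (hconst α α₀)) (E (e α)).2
            with he1
          have hEeq : ∀ α, E (e α) = ⟨(E (e α₀)).1, e1 α⟩ := by
            intro α
            refine Sigma.ext (hconst α α₀) ?_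
            exact (cast_heq _ _).symm
          refine (h1 (E (e α₀)).1).2.2 L (j.comp cK)
            ⟨e1, fun α t' => b α (P (Sum.inr (Sum.inr t'))), ?_, ?_, ?_⟩
          · intro a b' hab
            have : E (e a) = E (e b') := by rw [hEeq a, hEeq b', hab]
            exact he (E.injective this)
          · intro α t'
            have hmem := hb α (P (Sum.inr (Sum.inr t')))
            rw [hproj1 α t'] at hmem
            rw [he1]
            rw [hI1cast (hconst α α₀) (E (e α)).2]
            exact hmem
          · exact polyIndisc_comp hind _
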